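/- Let X be a complex Banach space, let τ > 0, and let U(t,s) be bounded linear operators on X defined for all real numbers t ≥ s satisfying: U(t,t) = I for all t; U(t,r)∘U(r,s) = U(t,s) whenever t ≥ r ≥ s; U(t+τ, s+τ) = U(t,s) whenever t ≥ s; and there is M₀ > 0 with ‖U(t,s)‖ ≤ M₀ whenever 0 ≤ t − s ≤ τ. Then there exist constants M, ω > 0 such that ‖U(t,s)‖ ≤ M·e^{−ω(t−s)} for all t ≥ s if and only if every λ in the spectrum of U(τ,0) satisfies |λ| < 1. -/

import Mathlib

open Filter ENNReal

/-- If every spectral value of `V` has modulus `< 1`, then the powers of `V`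
decay geometrically. -/
private lemma aux_pow_geom_bound {X : Type*} [NormedAddCommGroup X] [NormedSpace ℂ X]
    [CompleteSpace X] (V : X →L[ℂ] X) (hspec : ∀ lam ∈ spectrum ℂ V, ‖lam‖ < 1) :
    ∃ r C : ℝ, 0 < r ∧ r < 1 ∧ 1 ≤ C ∧ ∀ n : ℕ, ‖V ^ n‖ ≤ C * r ^ n := by
  rcases subsingleton_or_nontrivial X with hX | hX
  · refine ⟨1/2, 1, by norm_num, by norm_num, le_refl _, fun n => ?_⟩
    have : V ^ n = 0 := Subsingleton.elim _ _
    rw [this, norm_zero]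
    positivity
  -- nontrivial case : spectral radius < 1
  have hρ : spectralRadius ℂ V < 1 := by
    have hne := spectrum.nonempty V
    have := spectrum.spectralRadius_lt_of_forall_lt_of_nonempty hne (r := 1)
      (fun k hk => by simpa [← NNReal.coe_lt_coe] using hspec k hk)
    simpa using this
  -- Gelfand's formula : eventually ‖V^n‖ ≤ r^n
  obtain ⟨r₀, hr₀, hr₁⟩ := ENNReal.lt_iff_exists_nnreal_btwn.mp hρ
  set r : NNReal := max r₀ (1/2) with hrdef
  have hrlt1 : r < 1 := by
    have h2 : (1/2 : NNReal) < 1 := by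
      exact_mod_cast (by norm_num : (1/2:ℝ) < 1)
    exact max_lt (by exact_mod_cast hr₁) h2
  have hρr : spectralRadius ℂ V < (r : ℝ≥0∞) :=
    hr₀.trans_le (by exact_mod_cast le_max_left _ _)
  have htt := spectrum.pow_nnnorm_pow_one_div_tendsto_nhds_spectralRadius V
  have hev : ∀ᶠ n : ℕ in atTop, (‖V ^ n‖₊ : ℝ≥0∞) ^ (1 / (n:ℝ)) < (r : ℝ≥0∞) :=
    htt.eventually_lt_const hρr
  obtain ⟨N, hN⟩ := hev.exists_forall_of_atTop
  have key : ∀ n, max N 1 ≤ n → ‖V ^ n‖ ≤ (r:ℝ) ^ n := by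
    intro n hn
    have hn1 : 1 ≤ n := le_trans (le_max_right _ _) hn
    have h := hN n (le_trans (le_max_left _ _) hn)
    have hnpos : (0:ℝ) < n := by exact_mod_cast hn1
    have h2 : ((‖V ^ n‖₊ : ℝ≥0∞) ^ (1 / (n:ℝ))) ^ (n:ℝ) < (r : ℝ≥0∞) ^ (n:ℝ) :=
      ENNReal.rpow_lt_rpow h hnpos
    rw [← ENNReal.rpow_mul, one_div, inv_mul_cancel₀ (ne_of_gt hnpos),
      ENNReal.rpow_one] at h2
    have h3 : (‖V ^ n‖₊ : ℝ≥0∞) ≤ ((r ^ (n:ℝ) : NNReal) : ℝ≥0∞) := by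
      rw [ENNReal.coe_rpow_of_nonneg _ (le_of_lt hnpos)]
      exact le_of_lt h2
    have h4 : ‖V ^ n‖₊ ≤ r ^ (n:ℝ) := by exact_mod_cast h3
    calc ‖V ^ n‖ = (‖V ^ n‖₊ : ℝ) := rfl
      _ ≤ ((r ^ (n:ℝ) : NNReal) : ℝ) := by exact_mod_cast h4
      _ = (r:ℝ) ^ (n:ℝ) := by push_cast [NNReal.coe_rpow]; ring
      _ = (r:ℝ) ^ n := by rw [Real.rpow_natCast]
  -- package into a uniform geometric bound
  set Nn := max N 1 with hNn
  have hrpos : (0:ℝ) < r := by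
    have h : (1/2 : NNReal) ≤ r := le_max_right _ _
    have h' : (1/2 : ℝ) ≤ (r:ℝ) := by exact_mod_cast h
    linarith
  set S : NNReal := (Finset.range Nn).sup (fun m => ‖V ^ m‖₊) with hS
  refine ⟨r, max 1 ((S:ℝ) / (r:ℝ) ^ Nn), hrpos, by exact_mod_cast hrlt1,
    le_max_left _ _, fun n => ?_⟩
  rcases le_or_gt Nn n with hn | hn
  · calc ‖V ^ n‖ ≤ (r:ℝ) ^ n := key n hn
      _ = 1 * (r:ℝ) ^ n := (one_mul _).symm
      _ ≤ max 1 ((S:ℝ) / (r:ℝ) ^ Nn) * (r:ℝ) ^ n := by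
          apply mul_le_mul_of_nonneg_right (le_max_left _ _) (by positivity)
  · have h1 : ‖V ^ n‖₊ ≤ S := Finset.le_sup (f := fun m => ‖V ^ m‖₊) (Finset.mem_range.mpr hn)
    have h1' : ‖V ^ n‖ ≤ (S:ℝ) := by exact_mod_cast h1
    have hrN : (r:ℝ) ^ Nn ≤ (r:ℝ) ^ n := by
      apply pow_le_pow_of_le_one (le_of_lt hrpos) _ (le_of_lt hn)
      exact_mod_cast le_of_lt hrlt1
    have hrNpos : (0:ℝ) < (r:ℝ) ^ Nn := by positivity
    calc ‖V ^ n‖ ≤ (S:ℝ) := h1'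
      _ = ((S:ℝ) / (r:ℝ) ^ Nn) * (r:ℝ) ^ Nn := by field_simp
      _ ≤ ((S:ℝ) / (r:ℝ) ^ Nn) * (r:ℝ) ^ n := by
          apply mul_le_mul_of_nonneg_left hrN (by positivity)
      _ ≤ max 1 ((S:ℝ) / (r:ℝ) ^ Nn) * (r:ℝ) ^ n := by
          apply mul_le_mul_of_nonneg_right (le_max_right _ _) (by positivity)

set_option maxHeartbeats 1000000 in
/-- A τ-periodic, locally bounded evolution family `U(t,s)` on a complex
Banach space `X` is exponentially stable (`‖U(t,s)‖ ≤ M e^{-ω(t-s)}` for all `t ≥ s`)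
if and only if every element of the spectrum of the monodromy operator `U(τ,0)` has
modulus strictly less than one. -/
theorem periodic_evolution_family_exp_stable_iff_spectrum_lt_one
    {X : Type*} [NormedAddCommGroup X] [NormedSpace ℂ X] [CompleteSpace X]
    (τ : ℝ) (hτ : 0 < τ)
    (U : ℝ → ℝ → (X →L[ℂ] X))
    (hId : ∀ t : ℝ, U t t = 1)
    (hComp : ∀ t r s : ℝ, s ≤ r → r ≤ t → (U t r).comp (U r s) = U t s)
    (hPer : ∀ t s : ℝ, s ≤ t → U (t + τ) (s + τ) = U t s)
    (M₀ : ℝ) (hM₀ : 0 < M₀)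
    (hBdd : ∀ t s : ℝ, 0 ≤ t - s → t - s ≤ τ → ‖U t s‖ ≤ M₀) :
    (∃ M ω : ℝ, 0 < M ∧ 0 < ω ∧
        ∀ t s : ℝ, s ≤ t → ‖U t s‖ ≤ M * Real.exp (-ω * (t - s)))
      ↔ ∀ lam ∈ spectrum ℂ (U τ 0), ‖lam‖ < 1 := by
  -- one-step periodicity : U ((n+1)τ) (nτ) = U τ 0
  have hstep : ∀ n : ℕ, U (((n:ℝ)+1) * τ) ((n:ℝ) * τ) = U τ 0 := by
    intro n
    induction n with
    | zero => norm_num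
    | succ n ih =>
      rw [show ((n:ℝ)+1) * τ = (n:ℝ) * τ + τ by ring] at ih
      have e1 : (((n+1:ℕ):ℝ)+1) * τ = ((n:ℝ) * τ + τ) + τ := by push_cast; ring
      have e2 : ((n+1:ℕ):ℝ) * τ = ((n:ℝ) * τ) + τ := by push_cast; ring
      rw [e1, e2, hPer _ _ (by nlinarith)]
      exact ih
  -- powers of the monodromy operator
  have hpow : ∀ n : ℕ, U ((n:ℝ) * τ) 0 = (U τ 0) ^ n := by
    intro n
    induction n with
    | zero => simpa using hId 0
    | succ n ih =>
      have h1 : (U (((n:ℝ)+1) * τ) ((n:ℝ) * τ)).comp (U ((n:ℝ) * τ) 0)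
          = U (((n:ℝ)+1) * τ) 0 :=
        hComp _ _ _ (by positivity) (by nlinarith)
      have e : ((n+1:ℕ):ℝ) * τ = ((n:ℝ)+1) * τ := by push_cast; ring
      rw [e, ← h1, hstep n, ih, pow_succ']
      rfl
  constructor
  · -- exponential stability ⇒ spectrum inside unit disc
    rintro ⟨M, ω, hM, hω, h⟩ lam hlam
    rcases subsingleton_or_nontrivial X with hX | hX
    · rw [spectrum.of_subsingleton] at hlam
      exact absurd hlam (Set.notMem_empty lam)
    by_contra hge
    push_neg at hge
    have hexp1 : Real.exp (-ω * τ) < 1 := by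
      rw [Real.exp_lt_one_iff]
      nlinarith
    obtain ⟨n, hn⟩ := exists_pow_lt_of_lt_one (by positivity : (0:ℝ) < 1/M) hexp1
    have h1 : (1:ℝ) ≤ ‖lam‖ ^ n := one_le_pow₀ hge
    have hmem : lam ^ n ∈ spectrum ℂ ((U τ 0) ^ n) := by
      have h2 : lam ^ n ∈ (fun k => Polynomial.eval k (Polynomial.X ^ n : Polynomial ℂ)) ''
          spectrum ℂ (U τ 0) := ⟨lam, hlam, by simp⟩
      have := spectrum.subset_polynomial_aeval (U τ 0) (Polynomial.X ^ n : Polynomial ℂ) h2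
      simpa using this
    have h2 : ‖lam ^ n‖ ≤ ‖(U τ 0) ^ n‖ := spectrum.norm_le_norm_of_mem hmem
    have h3 : ‖U ((n:ℝ) * τ) 0‖ ≤ M * Real.exp (-ω * ((n:ℝ) * τ - 0)) :=
      h _ _ (by positivity)
    rw [hpow n] at h3
    rw [show -ω * ((n:ℝ) * τ - 0) = (n:ℝ) * (-ω * τ) by ring, Real.exp_nat_mul] at h3
    have h4 : M * Real.exp (-ω * τ) ^ n < 1 := by
      have := mul_lt_mul_of_pos_left hn hM
      rwa [mul_one_div, div_self (ne_of_gt hM)] at this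
    rw [norm_pow] at h2
    linarith
  · -- spectrum inside unit disc ⇒ exponential stability
    intro hspec
    obtain ⟨r, C, hr0, hr1, hC1, hpb⟩ := aux_pow_geom_bound (U τ 0) hspec
    have hlogr : Real.log r < 0 := Real.log_neg hr0 hr1
    set ω : ℝ := -Real.log r / τ with hωdef
    have hωpos : 0 < ω := div_pos (by linarith) hτ
    -- integer periodicity
    have hPerZ : ∀ (k : ℤ) (t s : ℝ), s ≤ t →
        U (t + (k:ℝ) * τ) (s + (k:ℝ) * τ) = U t s := by
      intro k
      induction k using Int.induction_on with
      | zero => intro t s _; norm_num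
      | succ i ih =>
        intro t s hst
        have e1 : t + (((i:ℤ)+1 : ℤ):ℝ) * τ = (t + ((i:ℤ):ℝ) * τ) + τ := by push_cast; ring
        have e2 : s + (((i:ℤ)+1 : ℤ):ℝ) * τ = (s + ((i:ℤ):ℝ) * τ) + τ := by push_cast; ring
        rw [e1, e2, hPer _ _ (by linarith)]
        exact ih t s hst
      | pred i ih =>
        intro t s hst
        have key := hPer (t + ((-(i:ℤ)-1 : ℤ):ℝ) * τ) (s + ((-(i:ℤ)-1 : ℤ):ℝ) * τ)
          (by push_cast; linarith)
        have e1 : t + ((-(i:ℤ)-1 : ℤ):ℝ) * τ + τ = t + ((-(i:ℤ) : ℤ):ℝ) * τ := by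
          push_cast; ring
        have e2 : s + ((-(i:ℤ)-1 : ℤ):ℝ) * τ + τ = s + ((-(i:ℤ) : ℤ):ℝ) * τ := by
          push_cast; ring
        rw [e1, e2] at key
        rw [← key]
        exact ih t s hst
    set M₁ : ℝ := max (M₀ * Real.exp (ω * τ)) (M₀ ^ 2 * C / r ^ 2) with hM₁
    have hM₁pos : 0 < M₁ := lt_max_of_lt_left (by positivity)
    -- core estimate for 0 ≤ s < τ
    have core : ∀ t s : ℝ, 0 ≤ s → s < τ → s ≤ t →
        ‖U t s‖ ≤ M₁ * Real.exp (-ω * (t - s)) := by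
      intro t s hs0 hsτ hst
      rcases le_or_gt t τ with htτ | htτ
      · -- short time : use the local bound
        have hb : ‖U t s‖ ≤ M₀ := hBdd t s (by linarith) (by linarith)
        have he : Real.exp (-ω * τ) ≤ Real.exp (-ω * (t - s)) := by
          apply Real.exp_le_exp.mpr
          nlinarith
        calc ‖U t s‖ ≤ M₀ := hb
          _ = M₀ * Real.exp (ω * τ) * Real.exp (-ω * τ) := by
              rw [mul_assoc, ← Real.exp_add]; norm_num
          _ ≤ M₀ * Real.exp (ω * τ) * Real.exp (-ω * (t - s)) := by
              apply mul_le_mul_of_nonneg_left he (by positivity)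
          _ ≤ M₁ * Real.exp (-ω * (t - s)) := by
              apply mul_le_mul_of_nonneg_right (le_max_left _ _) (Real.exp_nonneg _)
      · -- long time : decompose through powers of the monodromy operator
        set k : ℤ := ⌊t / τ⌋ with hk
        have hk1 : 1 ≤ k := by
          rw [hk, Int.le_floor, le_div_iff₀ hτ]
          push_cast; linarith
        have hk1' : (1:ℝ) ≤ (k:ℝ) := by exact_mod_cast hk1
        have hkle : (k:ℝ) * τ ≤ t := by
          have h := Int.floor_le (t / τ)
          calc (k:ℝ) * τ ≤ (t / τ) * τ := by
                apply mul_le_mul_of_nonneg_right h (le_of_lt hτ)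
            _ = t := by field_simp
        have hklt : t < ((k:ℝ) + 1) * τ := by
          have h := Int.lt_floor_add_one (t / τ)
          calc t = (t / τ) * τ := by field_simp
            _ < ((k:ℝ) + 1) * τ := by
                apply mul_lt_mul_of_pos_right _ hτ
                exact_mod_cast h
        set m : ℕ := (k - 1).toNat with hmdef
        have hmz : ((m:ℤ):ℝ) = ((k:ℝ) - 1) := by
          have h := Int.toNat_of_nonneg (show (0:ℤ) ≤ k - 1 by omega)
          rw [hmdef]
          push_cast [h]
          ring
        have hm : (k:ℝ) = (m:ℝ) + 1 := by push_cast at hmz ⊢; linarith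
        have hτk : τ ≤ (k:ℝ) * τ := by nlinarith
        have hd1 : (U t ((k:ℝ)*τ)).comp (U ((k:ℝ)*τ) s) = U t s :=
          hComp _ _ _ (by linarith) hkle
        have hd2 : (U ((k:ℝ)*τ) τ).comp (U τ s) = U ((k:ℝ)*τ) s :=
          hComp _ _ _ (le_of_lt hsτ) hτk
        have hmid : U ((k:ℝ)*τ) τ = (U τ 0) ^ m := by
          have hp := hPer ((m:ℝ)*τ) 0 (by positivity)
          rw [zero_add] at hp
          rw [show (k:ℝ)*τ = (m:ℝ)*τ + τ by rw [hm]; ring, hp, hpow m]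
        have hn1 : ‖U t ((k:ℝ)*τ)‖ ≤ M₀ := hBdd _ _ (by linarith) (by nlinarith)
        have hn3 : ‖U τ s‖ ≤ M₀ := hBdd _ _ (by linarith) (by linarith)
        have hn2 : ‖U ((k:ℝ)*τ) τ‖ ≤ C * r ^ m := hmid ▸ hpb m
        have hsplit : ‖U t s‖ ≤ M₀ * (C * r ^ m * M₀) := by
          rw [← hd1, ← hd2]
          calc ‖(U t ((k:ℝ)*τ)).comp ((U ((k:ℝ)*τ) τ).comp (U τ s))‖
              ≤ ‖U t ((k:ℝ)*τ)‖ * ‖(U ((k:ℝ)*τ) τ).comp (U τ s)‖ :=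
                ContinuousLinearMap.opNorm_comp_le _ _
            _ ≤ ‖U t ((k:ℝ)*τ)‖ * (‖U ((k:ℝ)*τ) τ‖ * ‖U τ s‖) := by
                apply mul_le_mul_of_nonneg_left
                  (ContinuousLinearMap.opNorm_comp_le _ _) (norm_nonneg _)
            _ ≤ M₀ * (C * r ^ m * M₀) := by
                apply mul_le_mul hn1 _ (by positivity) (le_of_lt hM₀)
                apply mul_le_mul hn2 hn3 (norm_nonneg _) (by positivity)
        -- bound r^m by the exponential
        have hmge : (t - s)/τ - 2 ≤ (m:ℝ) := by
          have h2 : t < ((m:ℝ)+2)*τ := by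
            rw [hm] at hklt; linarith
          rw [sub_le_iff_le_add, div_le_iff₀ hτ]
          nlinarith
        have hexp2 : (m:ℝ) * Real.log r ≤ ((t-s)/τ - 2) * Real.log r := by
          nlinarith
        have hre : ((t-s)/τ - 2) * Real.log r = -ω*(t-s) + (-(2*Real.log r)) := by
          rw [hωdef]; field_simp; ring
        have hrm : r ^ m ≤ Real.exp (-ω*(t-s)) * (1 / r^2) := by
          have h0 : r ^ m = Real.exp ((m:ℝ) * Real.log r) := by
            rw [Real.exp_nat_mul, Real.exp_log hr0]
          rw [h0]
          calc Real.exp ((m:ℝ)*Real.log r)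
              ≤ Real.exp (((t-s)/τ - 2)*Real.log r) := Real.exp_le_exp.mpr hexp2
            _ = Real.exp (-ω*(t-s)) * Real.exp (-(2*Real.log r)) := by
                rw [hre, Real.exp_add]
            _ = Real.exp (-ω*(t-s)) * (1/r^2) := by
                congr 1
                rw [show -(2*Real.log r) = -(Real.log (r^2)) by
                    rw [Real.log_pow]; push_cast; ring,
                  Real.exp_neg, Real.exp_log (by positivity), one_div]
        calc ‖U t s‖ ≤ M₀ * (C * r ^ m * M₀) := hsplit
          _ ≤ M₀ * (C * (Real.exp (-ω*(t-s)) * (1/r^2)) * M₀) := by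
              apply mul_le_mul_of_nonneg_left _ (le_of_lt hM₀)
              apply mul_le_mul_of_nonneg_right _ (le_of_lt hM₀)
              apply mul_le_mul_of_nonneg_left hrm (by linarith)
          _ = (M₀^2 * C / r^2) * Real.exp (-ω*(t-s)) := by
              rw [one_div, div_eq_mul_inv]; ring
          _ ≤ M₁ * Real.exp (-ω*(t-s)) :=
              mul_le_mul_of_nonneg_right (le_max_right _ _) (Real.exp_nonneg _)
    -- general case : shift `s` into `[0, τ)` by integer periodicity
    refine ⟨M₁, ω, hM₁pos, hωpos, fun t s hst => ?_⟩
    set j : ℤ := ⌊s/τ⌋ with hj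
    have h0 : 0 ≤ s - (j:ℝ)*τ := by
      have h := Int.floor_le (s / τ)
      have : (j:ℝ) * τ ≤ (s/τ) * τ := mul_le_mul_of_nonneg_right h (le_of_lt hτ)
      rw [div_mul_cancel₀ _ (ne_of_gt hτ)] at this
      linarith
    have h1 : s - (j:ℝ)*τ < τ := by
      have h := Int.lt_floor_add_one (s / τ)
      have : s / τ * τ < ((j:ℝ) + 1) * τ := by
        apply mul_lt_mul_of_pos_right _ hτ
        exact_mod_cast h
      rw [div_mul_cancel₀ _ (ne_of_gt hτ)] at this
      linarith
    have hU : U t s = U (t - (j:ℝ)*τ) (s - (j:ℝ)*τ) := by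
      have h := hPerZ j (t - (j:ℝ)*τ) (s - (j:ℝ)*τ) (by linarith)
      rw [show t - (j:ℝ)*τ + (j:ℝ)*τ = t by ring,
        show s - (j:ℝ)*τ + (j:ℝ)*τ = s by ring] at h
      exact h
    rw [hU]
    have h := core (t - (j:ℝ)*τ) (s - (j:ℝ)*τ) h0 h1 (by linarith)
    rw [show t - (j:ℝ)*τ - (s - (j:ℝ)*τ) = t - s by ring] at h
    exact h
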